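/- Let f : A → A' be a monoidal functor between categorical groups, and let α, α' : x → y be parallel morphisms in A with deviation β ∈ π₁(A), i.e. ρ(y)∘(α+β) = α'∘ρ(x). Then the deviation of f(α) and f(α') in A' is f_#(β), i.e. ρ(f(y)) ∘ (f(α) + f_#(β)) = f(α') ∘ ρ(f(x)). -/

import Mathlib

open CategoryTheory MonoidalCategory CategoryTheory.Functor

universe v u

/-- A categorical group: a monoidal groupoid in which every object has a weak inverse. -/
class CategoricalGroup (A : Type u) [Groupoid.{v} A] [MonoidalCategory A] where
  neg : A → A
  iota : ∀ a : A, neg a ⊗ a ≅ 𝟙_ A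

/-- `β ∈ π₁` is the deviation of the parallel morphisms `α, α' : x ⟶ y`:
`ρ(y) ∘ (α + β) = α' ∘ ρ(x)`. -/
def IsDeviation {A : Type u} [Category.{v} A] [MonoidalCategory A]
    {x y : A} (α α' : x ⟶ y) (β : 𝟙_ A ⟶ 𝟙_ A) : Prop :=
  (α ⊗ₘ β) ≫ (ρ_ y).hom = (ρ_ x).hom ≫ α'

/-- The map `f_#` induced on `π₁` by a monoidal functor, sending `β : 0 → 0` to
`f₀⁻¹ ∘ f(β) ∘ f₀` (diagrammatic order). -/
def piOneMap {A A' : Type u} [Category.{v} A] [MonoidalCategory A]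
    [Category.{v} A'] [MonoidalCategory A']
    (F : A ⥤ A') [F.Monoidal] : (𝟙_ A ⟶ 𝟙_ A) → (𝟙_ A' ⟶ 𝟙_ A') :=
  fun β => LaxMonoidal.ε F ≫ F.map β ≫ (Monoidal.εIso F).inv

/-- If `α, α' : x ⟶ y` are parallel morphisms in a categorical group with
deviation `β`, then for any monoidal functor `f` between categorical groups,
the deviation of `f(α)` and `f(α')` is `f_#(β)`. -/
theorem deviation_map
    {A A' : Type u} [Groupoid.{v} A] [MonoidalCategory A] [CategoricalGroup A]
    [Groupoid.{v} A'] [MonoidalCategory A'] [CategoricalGroup A']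
    (F : A ⥤ A') [F.Monoidal]
    {x y : A} (α α' : x ⟶ y) (β : 𝟙_ A ⟶ 𝟙_ A)
    (h : IsDeviation α α' β) :
    IsDeviation (F.map α) (F.map α') (piOneMap F β) := by
  have h3 : α ≫ (ρ_ y).inv ≫ (y ◁ β) ≫ (ρ_ y).hom = α' := by
    rw [IsDeviation, MonoidalCategory.tensorHom_def] at h
    rw [← cancel_epi (ρ_ x).hom, ← h, MonoidalCategory.whiskerRight_id]
    simp
  simp only [IsDeviation, piOneMap]
  have h2 := congrArg F.map h3
  simp only [F.map_comp] at h2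
  simp only [MonoidalCategory.tensorHom_def, Monoidal.εIso, Iso.trans_inv, Iso.symm_inv, asIso_hom,
    Category.assoc]
  simp [MonoidalCategory.tensorHom_def]
  rw [h2]
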